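/- Let A be a finite-dimensional unital associative algebra over ℂ with multiplication μ : A × A → A, and let φ : A × A → A be a unital bilinear map. Then φ is a degeneration of μ (φ ⊴ μ) if and only if φ is an algebraic degeneration of μ (φ ⊴ₐ μ). -/

import Mathlib

open scoped BigOperators

/-- The bilinear map `ℂⁿ × ℂⁿ → ℂⁿ` induced by a structure-constant array `μ`
(the coordinate description of a bilinear map on an `n`-dimensional space). -/
noncomputable def mulOf {n : ℕ} (μ : Fin n → Fin n → Fin n → ℂ)
    (x y : Fin n → ℂ) : Fin n → ℂ :=
  fun k => ∑ i, ∑ j, μ i j k * x i * y j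

/-- A bilinear map is unital if it has a two-sided identity element. -/
def IsUnitalBil {n : ℕ} (μ : Fin n → Fin n → Fin n → ℂ) : Prop :=
  ∃ e : Fin n → ℂ, ∀ x : Fin n → ℂ, mulOf μ e x = x ∧ mulOf μ x e = x

/-- Associativity of the bilinear map given by the array `μ`. -/
def IsAssocBil {n : ℕ} (μ : Fin n → Fin n → Fin n → ℂ) : Prop :=
  ∀ x y z : Fin n → ℂ, mulOf μ (mulOf μ x y) z = mulOf μ x (mulOf μ y z)

/-- The set of restrictions `(x, y) ↦ H (μ (F x, G y))` of the bilinear map `μ`,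
for linear maps `F G H`, written in coordinates. -/
def BilRestrictions {n : ℕ} (μ : Fin n → Fin n → Fin n → ℂ) :
    Set (Fin n → Fin n → Fin n → ℂ) :=
  {S | ∃ F G H : Matrix (Fin n) (Fin n) ℂ,
    S = fun i j k => ∑ a, ∑ b, ∑ c, F a i * G b j * H k c * μ a b c}

/-- The `GL(V)`-orbit `{(x, y) ↦ g (μ (g⁻¹ x, g⁻¹ y)) : g ∈ GL(V)}` of the
bilinear map `μ`, written in coordinates. -/
def BilOrbit {n : ℕ} (μ : Fin n → Fin n → Fin n → ℂ) :
    Set (Fin n → Fin n → Fin n → ℂ) :=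
  {S | ∃ g : GL (Fin n) ℂ,
    S = fun i j k => ∑ a, ∑ b, ∑ c,
      (↑g⁻¹ : Matrix (Fin n) (Fin n) ℂ) a i *
      (↑g⁻¹ : Matrix (Fin n) (Fin n) ℂ) b j *
      (↑g : Matrix (Fin n) (Fin n) ℂ) k c * μ a b c}

namespace Stmt0Aux

open Matrix Filter

variable {n : ℕ}

/-- reorder five nested sums -/
lemma sum_reorder (f : Fin n → Fin n → Fin n → Fin n → Fin n → ℂ) :
    ∑ i, ∑ j, ∑ a, ∑ b, ∑ c, f i j a b c = ∑ c, ∑ a, ∑ b, ∑ i, ∑ j, f i j a b c := by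
  conv_lhs => enter [2, i, 2, j, 2, a]; rw [Finset.sum_comm]
  conv_lhs => enter [2, i, 2, j]; rw [Finset.sum_comm]
  conv_lhs => enter [2, i]; rw [Finset.sum_comm]
  rw [Finset.sum_comm]
  conv_lhs => enter [2, c, 2, i]; rw [Finset.sum_comm]
  conv_lhs => enter [2, c, 2, i, 2, a]; rw [Finset.sum_comm]
  conv_lhs => enter [2, c]; rw [Finset.sum_comm]
  conv_lhs => enter [2, c, 2, a]; rw [Finset.sum_comm]

lemma mulOf_single (S : Fin n → Fin n → Fin n → ℂ) (i j : Fin n) :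
    mulOf S (Pi.single i 1) (Pi.single j 1) = fun k => S i j k := by
  funext k
  simp [mulOf, Pi.single_apply, mul_ite, ite_mul, zero_mul, mul_zero,
    Finset.sum_ite_eq, Finset.sum_ite_eq']

/-- coordinate formula of a restriction, as a bilinear map -/
lemma bigr (μ : Fin n → Fin n → Fin n → ℂ) (F G H : Matrix (Fin n) (Fin n) ℂ)
    (x y : Fin n → ℂ) :
    mulOf (fun i j k => ∑ a, ∑ b, ∑ c, F a i * G b j * H k c * μ a b c) x y
      = H *ᵥ mulOf μ (F *ᵥ x) (G *ᵥ y) := by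
  funext k
  simp only [mulOf, Matrix.mulVec, dotProduct, Finset.sum_mul, Finset.mul_sum]
  rw [sum_reorder]
  conv_lhs => enter [2, c, 2, a, 2, b]; rw [Finset.sum_comm]
  refine Finset.sum_congr rfl fun c _ => Finset.sum_congr rfl fun a _ =>
    Finset.sum_congr rfl fun b _ => Finset.sum_congr rfl fun i _ =>
    Finset.sum_congr rfl fun j _ => by ring

/-- matrix of left multiplication by `a` -/
noncomputable def Lmat (μ : Fin n → Fin n → Fin n → ℂ) (a : Fin n → ℂ) : Matrix (Fin n) (Fin n) ℂ :=
  fun k j => ∑ i, μ i j k * a i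

/-- matrix of right multiplication by `b` -/
noncomputable def Rmat (μ : Fin n → Fin n → Fin n → ℂ) (b : Fin n → ℂ) : Matrix (Fin n) (Fin n) ℂ :=
  fun k i => ∑ j, μ i j k * b j

lemma Lmat_mulVec (μ : Fin n → Fin n → Fin n → ℂ) (a z : Fin n → ℂ) :
    Lmat μ a *ᵥ z = mulOf μ a z := by
  funext k
  simp only [Lmat, mulOf, Matrix.mulVec, dotProduct, Finset.sum_mul]
  rw [Finset.sum_comm]

lemma Rmat_mulVec (μ : Fin n → Fin n → Fin n → ℂ) (b z : Fin n → ℂ) :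
    Rmat μ b *ᵥ z = mulOf μ z b := by
  funext k
  simp only [Rmat, mulOf, Matrix.mulVec, dotProduct, Finset.sum_mul]
  exact Finset.sum_congr rfl fun i _ => Finset.sum_congr rfl fun j _ => by ring

-- invertibility helpers over ℂ
lemma surj_of_inj (M : Matrix (Fin n) (Fin n) ℂ) (h : Function.Injective M.mulVec) :
    Function.Surjective M.mulVec :=
  Matrix.mulVec_surjective_iff_isUnit.mpr (Matrix.mulVec_injective_iff_isUnit.mp h)

lemma inj_of_surj (M : Matrix (Fin n) (Fin n) ℂ) (h : Function.Surjective M.mulVec) :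
    Function.Injective M.mulVec :=
  Matrix.mulVec_injective_iff_isUnit.mpr (Matrix.mulVec_surjective_iff_isUnit.mp h)

lemma det_of_inj (M : Matrix (Fin n) (Fin n) ℂ) (h : Function.Injective M.mulVec) :
    IsUnit M.det :=
  (Matrix.isUnit_iff_isUnit_det _).mp (Matrix.mulVec_injective_iff_isUnit.mp h)

lemma inj_of_det (M : Matrix (Fin n) (Fin n) ℂ) (h : IsUnit M.det) :
    Function.Injective M.mulVec :=
  Matrix.mulVec_injective_iff_isUnit.mpr ((Matrix.isUnit_iff_isUnit_det _).mpr h)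

lemma surj_of_det (M : Matrix (Fin n) (Fin n) ℂ) (h : IsUnit M.det) :
    Function.Surjective M.mulVec :=
  Matrix.mulVec_surjective_iff_isUnit.mpr ((Matrix.isUnit_iff_isUnit_det _).mpr h)

lemma inv_mulVec_mulVec (M : Matrix (Fin n) (Fin n) ℂ) (h : IsUnit M.det) (x : Fin n → ℂ) :
    M⁻¹ *ᵥ (M *ᵥ x) = x := by
  rw [Matrix.mulVec_mulVec, Matrix.nonsing_inv_mul M h, Matrix.one_mulVec]

lemma mulVec_inv_mulVec (M : Matrix (Fin n) (Fin n) ℂ) (h : IsUnit M.det) (x : Fin n → ℂ) :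
    M *ᵥ (M⁻¹ *ᵥ x) = x := by
  rw [Matrix.mulVec_mulVec, Matrix.mul_nonsing_inv M h, Matrix.one_mulVec]

/-- the normalizing transformation -/
noncomputable def theta (e : Fin n → ℂ) (S : Fin n → Fin n → Fin n → ℂ) :
    Fin n → Fin n → Fin n → ℂ :=
  fun i j k => ∑ b, ∑ c, S i b c * (((Lmat S e)⁻¹ * Rmat S e) b j) * ((Rmat S e)⁻¹ k c)

lemma mulOf_single_left (S : Fin n → Fin n → Fin n → ℂ) (i : Fin n) (w : Fin n → ℂ) :
    mulOf S (Pi.single i 1) w = fun c => ∑ b, S i b c * w b := by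
  funext c
  simp only [mulOf]
  rw [Finset.sum_comm]
  simp [Pi.single_apply, mul_ite, ite_mul, mul_one, mul_zero, zero_mul,
    Finset.sum_ite_eq, Finset.sum_ite_eq']

lemma theta_apply (e : Fin n → ℂ) (S : Fin n → Fin n → Fin n → ℂ) (i j k : Fin n) :
    theta e S i j k
      = ((Rmat S e)⁻¹ *ᵥ mulOf S (Pi.single i 1)
          (((Lmat S e)⁻¹ * Rmat S e) *ᵥ Pi.single j 1)) k := by
  rw [Matrix.mulVec_single, mulOf_single_left]
  simp only [theta, mul_one, Matrix.mulVec, dotProduct, Finset.mul_sum, MulOpposite.op_one, one_smul, Matrix.col_apply]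
  rw [Finset.sum_comm]
  exact Finset.sum_congr rfl fun c _ => Finset.sum_congr rfl fun b _ => by ring

lemma unit_right (φ : Fin n → Fin n → Fin n → ℂ) (e : Fin n → ℂ)
    (he : ∀ x, mulOf φ x e = x) : Rmat φ e = 1 := by
  funext k i
  have h := congrFun (he (Pi.single i 1)) k
  simp only [mulOf, Pi.single_apply, mul_ite, ite_mul, mul_one, one_mul, mul_zero, zero_mul,
    Finset.sum_ite_eq, Finset.mem_univ, if_true] at h
  simpa [Rmat, Matrix.one_apply, Pi.single_apply] using h

lemma unit_left (φ : Fin n → Fin n → Fin n → ℂ) (e : Fin n → ℂ)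
    (he : ∀ x, mulOf φ e x = x) : Lmat φ e = 1 := by
  funext k j
  have h := congrFun (he (Pi.single j 1)) k
  simp only [mulOf, Pi.single_apply, mul_ite, ite_mul, mul_one, one_mul, mul_zero, zero_mul,
    Finset.sum_ite_eq, Finset.mem_univ, if_true] at h
  rw [Finset.sum_comm] at h
  simpa [Lmat, Matrix.one_apply, Pi.single_apply] using h

lemma theta_phi (e : Fin n → ℂ) (φ : Fin n → Fin n → Fin n → ℂ)
    (h1 : Rmat φ e = 1) (h2 : Lmat φ e = 1) : theta e φ = φ := by
  funext i j k
  simp [theta, h1, h2, inv_one, Matrix.one_apply, mul_ite, ite_mul, mul_one, one_mul,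
    mul_zero, zero_mul, Finset.sum_ite_eq, Finset.sum_ite_eq']

lemma restr_spec (μ S : Fin n → Fin n → Fin n → ℂ) (h : S ∈ BilRestrictions μ) :
    ∃ F G H : Matrix (Fin n) (Fin n) ℂ, ∀ x y,
      mulOf S x y = H *ᵥ mulOf μ (F *ᵥ x) (G *ᵥ y) := by
  obtain ⟨F, G, H, rfl⟩ := h
  exact ⟨F, G, H, fun x y => bigr μ F G H x y⟩

lemma mem_orbit_of (μ S : Fin n → Fin n → Fin n → ℂ) (g : GL (Fin n) ℂ)
    (h : ∀ i j k, S i j k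
        = ((↑g : Matrix (Fin n) (Fin n) ℂ) *ᵥ mulOf μ
            ((↑g⁻¹ : Matrix (Fin n) (Fin n) ℂ) *ᵥ Pi.single i 1)
            ((↑g⁻¹ : Matrix (Fin n) (Fin n) ℂ) *ᵥ Pi.single j 1)) k) :
    S ∈ BilOrbit μ := by
  refine ⟨g, ?_⟩
  funext i j k
  have h2 := mulOf_single (fun i j k => ∑ a, ∑ b, ∑ c,
      (↑g⁻¹ : Matrix (Fin n) (Fin n) ℂ) a i * (↑g⁻¹ : Matrix (Fin n) (Fin n) ℂ) b j *
      (↑g : Matrix (Fin n) (Fin n) ℂ) k c * μ a b c) i j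
  rw [bigr] at h2
  rw [h i j k]
  exact congrFun h2 k

lemma theta_mem (μ : Fin n → Fin n → Fin n → ℂ) (eA : Fin n → ℂ)
    (hA1 : ∀ x, mulOf μ eA x = x) (hA2 : ∀ x, mulOf μ x eA = x)
    (hassoc : IsAssocBil μ) (e : Fin n → ℂ) (S : Fin n → Fin n → Fin n → ℂ)
    (hS : S ∈ BilRestrictions μ)
    (hA : IsUnit (Rmat S e).det) (hB : IsUnit (Lmat S e).det) :
    theta e S ∈ BilOrbit μ := by
  obtain ⟨F, G, H, hres⟩ := restr_spec μ S hS
  have hAx : ∀ x, Rmat S e *ᵥ x = H *ᵥ mulOf μ (F *ᵥ x) (G *ᵥ e) := fun x => by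
    rw [Rmat_mulVec, hres]
  have hBy : ∀ y, Lmat S e *ᵥ y = H *ᵥ mulOf μ (F *ᵥ e) (G *ᵥ y) := fun y => by
    rw [Lmat_mulVec, hres]
  have hAinj : Function.Injective (Rmat S e).mulVec := inj_of_det _ hA
  have hBinj : Function.Injective (Lmat S e).mulVec := inj_of_det _ hB
  have hAsurj : Function.Surjective (Rmat S e).mulVec := surj_of_det _ hA
  have hFinj : Function.Injective F.mulVec := fun x₁ x₂ hx =>
    hAinj (show Rmat S e *ᵥ x₁ = Rmat S e *ᵥ x₂ by
      rw [hAx, hAx]; show _ = H *ᵥ mulOf μ (F.mulVec x₂) _; rw [← hx])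
  have hGinj : Function.Injective G.mulVec := fun y₁ y₂ hy =>
    hBinj (show Lmat S e *ᵥ y₁ = Lmat S e *ᵥ y₂ by
      rw [hBy, hBy]; show _ = H *ᵥ mulOf μ _ (G.mulVec y₂); rw [← hy])
  have hFsurj := surj_of_inj _ hFinj
  have hGsurj := surj_of_inj _ hGinj
  have hHsurj : Function.Surjective H.mulVec := fun w => by
    obtain ⟨x, hx⟩ := hAsurj w
    exact ⟨mulOf μ (F *ᵥ x) (G *ᵥ e), by rw [show H.mulVec _ = _ from (hAx x).symm]; exact hx⟩
  have hHinj := inj_of_surj _ hHsurj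
  -- left multiplication by u := F *ᵥ e is injective, hence u is invertible
  have hLuinj : Function.Injective (Lmat μ (F *ᵥ e)).mulVec := by
    intro z₁ z₂ hz
    rw [show (Lmat μ (F *ᵥ e)).mulVec z₁ = mulOf μ (F *ᵥ e) z₁ from Lmat_mulVec _ _ _,
      show (Lmat μ (F *ᵥ e)).mulVec z₂ = mulOf μ (F *ᵥ e) z₂ from Lmat_mulVec _ _ _] at hz
    obtain ⟨y₁, rfl⟩ := hGsurj z₁
    obtain ⟨y₂, rfl⟩ := hGsurj z₂
    have : Lmat S e *ᵥ y₁ = Lmat S e *ᵥ y₂ := by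
      rw [hBy, hBy]
      show H *ᵥ mulOf μ _ (G.mulVec y₁) = H *ᵥ mulOf μ _ (G.mulVec y₂)
      rw [hz]
    rw [hBinj this]
  obtain ⟨wu, hwu⟩ : ∃ wu, mulOf μ (F *ᵥ e) wu = eA := by
    obtain ⟨wu, h0⟩ := surj_of_inj _ hLuinj eA
    exact ⟨wu, by rw [← Lmat_mulVec]; exact h0⟩
  have hwu2 : mulOf μ wu (F *ᵥ e) = eA := by
    apply hLuinj
    show Lmat μ (F *ᵥ e) *ᵥ _ = Lmat μ (F *ᵥ e) *ᵥ _
    rw [Lmat_mulVec, Lmat_mulVec, hA2, ← hassoc, hwu, hA1]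
  -- right multiplication by v := G *ᵥ e is injective, hence v is invertible
  have hRvinj : Function.Injective (Rmat μ (G *ᵥ e)).mulVec := by
    intro z₁ z₂ hz
    rw [show (Rmat μ (G *ᵥ e)).mulVec z₁ = mulOf μ z₁ (G *ᵥ e) from Rmat_mulVec _ _ _,
      show (Rmat μ (G *ᵥ e)).mulVec z₂ = mulOf μ z₂ (G *ᵥ e) from Rmat_mulVec _ _ _] at hz
    obtain ⟨x₁, rfl⟩ := hFsurj z₁
    obtain ⟨x₂, rfl⟩ := hFsurj z₂
    have : Rmat S e *ᵥ x₁ = Rmat S e *ᵥ x₂ := by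
      rw [hAx, hAx]
      show H *ᵥ mulOf μ (F.mulVec x₁) _ = H *ᵥ mulOf μ (F.mulVec x₂) _
      rw [hz]
    rw [hAinj this]
  obtain ⟨wv, hwv⟩ : ∃ wv, mulOf μ wv (G *ᵥ e) = eA := by
    obtain ⟨wv, h0⟩ := surj_of_inj _ hRvinj eA
    exact ⟨wv, by rw [← Rmat_mulVec]; exact h0⟩
  have hwv2 : mulOf μ (G *ᵥ e) wv = eA := by
    apply hRvinj
    show Rmat μ (G *ᵥ e) *ᵥ _ = Rmat μ (G *ᵥ e) *ᵥ _
    rw [Rmat_mulVec, Rmat_mulVec, hassoc, hwv, hA2, hA1]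
  -- the twisting element c = v⁻¹ * u⁻¹
  have hvc : mulOf μ (G *ᵥ e) (mulOf μ wv wu) = wu := by
    rw [← hassoc, hwv2, hA1]
  have hLc : ∀ z, mulOf μ (F *ᵥ e) (mulOf μ (G *ᵥ e) (mulOf μ (mulOf μ wv wu) z)) = z := by
    intro z
    rw [← hassoc (G *ᵥ e), hvc, ← hassoc, hwu, hA1]
  have hLcinj : Function.Injective (Lmat μ (mulOf μ wv wu)).mulVec := by
    intro z₁ z₂ hz
    rw [show (Lmat μ _).mulVec z₁ = mulOf μ (mulOf μ wv wu) z₁ from Lmat_mulVec _ _ _,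
      show (Lmat μ _).mulVec z₂ = mulOf μ (mulOf μ wv wu) z₂ from Lmat_mulVec _ _ _] at hz
    calc z₁ = mulOf μ (F *ᵥ e) (mulOf μ (G *ᵥ e) (mulOf μ (mulOf μ wv wu) z₁)) := (hLc z₁).symm
      _ = mulOf μ (F *ᵥ e) (mulOf μ (G *ᵥ e) (mulOf μ (mulOf μ wv wu) z₂)) := by rw [hz]
      _ = z₂ := hLc z₂
  -- the matrix P
  set P : Matrix (Fin n) (Fin n) ℂ := Lmat μ (mulOf μ wv wu) * (Rmat μ (G *ᵥ e) * F) with hPdef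
  have hPx : ∀ x, P *ᵥ x = mulOf μ (mulOf μ wv wu) (mulOf μ (F *ᵥ x) (G *ᵥ e)) := by
    intro x
    rw [hPdef, ← Matrix.mulVec_mulVec, ← Matrix.mulVec_mulVec, Lmat_mulVec, Rmat_mulVec]
  have hPinj : Function.Injective P.mulVec := by
    intro x₁ x₂ hx
    rw [show P.mulVec x₁ = P *ᵥ x₁ from rfl, show P.mulVec x₂ = P *ᵥ x₂ from rfl,
      hPx, hPx] at hx
    have h1 : mulOf μ (F *ᵥ x₁) (G *ᵥ e) = mulOf μ (F *ᵥ x₂) (G *ᵥ e) := by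
      apply hLcinj
      show Lmat μ _ *ᵥ _ = Lmat μ _ *ᵥ _
      rw [Lmat_mulVec, Lmat_mulVec]; exact hx
    have h2 : F *ᵥ x₁ = F *ᵥ x₂ := by
      apply hRvinj
      show Rmat μ _ *ᵥ _ = Rmat μ _ *ᵥ _
      rw [Rmat_mulVec, Rmat_mulVec]; exact h1
    exact hFinj h2
  have hPdet : IsUnit P.det := det_of_inj _ hPinj
  have hFdet : IsUnit F.det := det_of_inj _ hFinj
  -- the key pointwise identity
  have key : ∀ x y,
      (Rmat S e)⁻¹ *ᵥ mulOf S x (((Lmat S e)⁻¹ * Rmat S e) *ᵥ y)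
        = P⁻¹ *ᵥ mulOf μ (P *ᵥ x) (P *ᵥ y) := by
    intro x y
    have hFz : F *ᵥ (F⁻¹ *ᵥ mulOf μ (F *ᵥ x) (mulOf μ wu (F *ᵥ y)))
        = mulOf μ (F *ᵥ x) (mulOf μ wu (F *ᵥ y)) := mulVec_inv_mulVec F hFdet _
    have hPz : P *ᵥ (F⁻¹ *ᵥ mulOf μ (F *ᵥ x) (mulOf μ wu (F *ᵥ y)))
        = mulOf μ (P *ᵥ x) (P *ᵥ y) := by
      rw [hPx, hPx, hPx, hFz]
      calc mulOf μ (mulOf μ wv wu) (mulOf μ (mulOf μ (F *ᵥ x) (mulOf μ wu (F *ᵥ y))) (G *ᵥ e))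
          = mulOf μ (mulOf μ wv wu) (mulOf μ (F *ᵥ x) (mulOf μ (mulOf μ wu (F *ᵥ y)) (G *ᵥ e))) := by
            rw [hassoc (F *ᵥ x)]
        _ = mulOf μ (mulOf μ wv wu) (mulOf μ (F *ᵥ x) (mulOf μ wu (mulOf μ (F *ᵥ y) (G *ᵥ e)))) := by
            rw [hassoc wu]
        _ = mulOf μ (mulOf μ wv wu) (mulOf μ (F *ᵥ x) (mulOf μ (mulOf μ (G *ᵥ e) (mulOf μ wv wu)) (mulOf μ (F *ᵥ y) (G *ᵥ e)))) := by
            rw [hvc]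
        _ = mulOf μ (mulOf μ wv wu) (mulOf μ (F *ᵥ x) (mulOf μ (G *ᵥ e) (mulOf μ (mulOf μ wv wu) (mulOf μ (F *ᵥ y) (G *ᵥ e))))) := by
            rw [hassoc (G *ᵥ e)]
        _ = mulOf μ (mulOf μ wv wu) (mulOf μ (mulOf μ (F *ᵥ x) (G *ᵥ e)) (mulOf μ (mulOf μ wv wu) (mulOf μ (F *ᵥ y) (G *ᵥ e)))) := by
            rw [← hassoc (F *ᵥ x) (G *ᵥ e)]
        _ = mulOf μ (mulOf μ (mulOf μ wv wu) (mulOf μ (F *ᵥ x) (G *ᵥ e))) (mulOf μ (mulOf μ wv wu) (mulOf μ (F *ᵥ y) (G *ᵥ e))) := by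
            rw [← hassoc (mulOf μ wv wu)]
    have hstep3 : P⁻¹ *ᵥ mulOf μ (P *ᵥ x) (P *ᵥ y)
        = F⁻¹ *ᵥ mulOf μ (F *ᵥ x) (mulOf μ wu (F *ᵥ y)) := by
      rw [← hPz, inv_mulVec_mulVec P hPdet]
    -- step 4 : G *ᵥ ((Lmat S e)⁻¹ * Rmat S e *ᵥ y) = (wu * fy) * v
    have hBs : Lmat S e *ᵥ (((Lmat S e)⁻¹ * Rmat S e) *ᵥ y) = Rmat S e *ᵥ y := by
      rw [Matrix.mulVec_mulVec, ← Matrix.mul_assoc, Matrix.mul_nonsing_inv _ hB,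
        Matrix.one_mul]
    have h2 : mulOf μ (F *ᵥ e) (G *ᵥ (((Lmat S e)⁻¹ * Rmat S e) *ᵥ y))
        = mulOf μ (F *ᵥ y) (G *ᵥ e) := by
      apply hHinj
      show H *ᵥ _ = H *ᵥ _
      rw [← hBy, ← hAx, hBs]
    have hGRy : G *ᵥ (((Lmat S e)⁻¹ * Rmat S e) *ᵥ y)
        = mulOf μ (mulOf μ wu (F *ᵥ y)) (G *ᵥ e) := by
      calc G *ᵥ (((Lmat S e)⁻¹ * Rmat S e) *ᵥ y)
          = mulOf μ wu (mulOf μ (F *ᵥ e) (G *ᵥ (((Lmat S e)⁻¹ * Rmat S e) *ᵥ y))) := by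
            rw [← hassoc, hwu2, hA1]
        _ = mulOf μ wu (mulOf μ (F *ᵥ y) (G *ᵥ e)) := by rw [h2]
        _ = mulOf μ (mulOf μ wu (F *ᵥ y)) (G *ᵥ e) := by rw [← hassoc]
    have hSxRy : mulOf S x (((Lmat S e)⁻¹ * Rmat S e) *ᵥ y)
        = Rmat S e *ᵥ (F⁻¹ *ᵥ mulOf μ (F *ᵥ x) (mulOf μ wu (F *ᵥ y))) := by
      rw [hres, hGRy, hAx, hFz, hassoc (F *ᵥ x) (mulOf μ wu (F *ᵥ y)) (G *ᵥ e)]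
    rw [hSxRy, inv_mulVec_mulVec _ hA, hstep3]
  -- conclude
  have hu := Matrix.nonsingInvUnit P hPdet
  refine mem_orbit_of μ _ (Matrix.nonsingInvUnit P hPdet)⁻¹ ?_
  intro i j k
  have hg1 : (↑(Matrix.nonsingInvUnit P hPdet)⁻¹ : Matrix (Fin n) (Fin n) ℂ) = P⁻¹ :=
    Matrix.coe_units_inv _
  have hg2 : (↑((Matrix.nonsingInvUnit P hPdet)⁻¹)⁻¹ : Matrix (Fin n) (Fin n) ℂ) = P := by
    rw [inv_inv]; rfl
  rw [theta_apply, hg1, hg2, key]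

lemma happ (i j k : Fin n) :
    Continuous fun S : Fin n → Fin n → Fin n → ℂ => S i j k :=
  (continuous_apply k).comp ((continuous_apply j).comp (continuous_apply i))

lemma cont_Rmat (e : Fin n → ℂ) :
    Continuous fun S : Fin n → Fin n → Fin n → ℂ => Rmat S e := by
  apply continuous_pi; intro k; apply continuous_pi; intro i
  exact continuous_finset_sum _ fun j _ => (happ i j k).mul continuous_const

lemma cont_Lmat (e : Fin n → ℂ) :
    Continuous fun S : Fin n → Fin n → Fin n → ℂ => Lmat S e := by
  apply continuous_pi; intro k; apply continuous_pi; intro j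
  exact continuous_finset_sum _ fun i _ => (happ i j k).mul continuous_const

lemma contAt_inv {φ : Fin n → Fin n → Fin n → ℂ}
    {f : (Fin n → Fin n → Fin n → ℂ) → Matrix (Fin n) (Fin n) ℂ}
    (hf : Continuous f) (h1 : f φ = 1) :
    ContinuousAt (fun S => (f S)⁻¹) φ := by
  refine (continuousAt_matrix_inv (f φ) ?_).comp hf.continuousAt
  rw [h1, Matrix.det_one]
  rw [Ring.inverse_eq_inv']
  exact continuousAt_inv₀ one_ne_zero

lemma hentry {φ : Fin n → Fin n → Fin n → ℂ}
    {f : (Fin n → Fin n → Fin n → ℂ) → Matrix (Fin n) (Fin n) ℂ}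
    (hf : ContinuousAt f φ) (a b : Fin n) :
    ContinuousAt (fun S => f S a b) φ := by
  have hc : Continuous fun M : Matrix (Fin n) (Fin n) ℂ => M a b :=
    (continuous_apply b).comp (continuous_apply a)
  exact hc.continuousAt.comp hf

lemma theta_contAt (e : Fin n → ℂ) (φ : Fin n → Fin n → Fin n → ℂ)
    (h1 : Rmat φ e = 1) (h2 : Lmat φ e = 1) : ContinuousAt (theta e) φ := by
  have hR := cont_Rmat e
  have hL := cont_Lmat e
  have hRinv : ContinuousAt (fun S => (Rmat S e)⁻¹) φ := contAt_inv hR h1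
  have hLinv : ContinuousAt (fun S => (Lmat S e)⁻¹) φ := contAt_inv hL h2
  have hQ : ContinuousAt (fun S => (Lmat S e)⁻¹ * Rmat S e) φ := hLinv.mul hR.continuousAt
  rw [continuousAt_pi]; intro i
  rw [continuousAt_pi]; intro j
  rw [continuousAt_pi]; intro k
  show Filter.Tendsto (fun S => theta e S i j k) (nhds φ) _
  simp only [theta]
  refine tendsto_finset_sum _ fun b _ => tendsto_finset_sum _ fun c _ => ?_
  exact (((happ i b c).continuousAt).mul (hentry hQ b j)).mul (hentry hRinv k c)

end Stmt0Aux

/-- for a finite-dimensional unital associative algebra with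
multiplication `μ` and a unital bilinear map `φ` on the same space,
`φ` is a degeneration of `μ` iff `φ` is an algebraic degeneration of `μ`. -/
theorem stmt0 {n : ℕ} (μ φ : Fin n → Fin n → Fin n → ℂ)
    (hμ_unital : IsUnitalBil μ) (hμ_assoc : IsAssocBil μ)
    (hφ_unital : IsUnitalBil φ) :
    φ ∈ closure (BilRestrictions μ) ↔ φ ∈ closure (BilOrbit μ) := by
  constructor
  · intro h
    obtain ⟨eA, heA⟩ := hμ_unital
    obtain ⟨e, he⟩ := hφ_unital
    have h1 : Stmt0Aux.Rmat φ e = 1 := Stmt0Aux.unit_right φ e fun x => (he x).2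
    have h2 : Stmt0Aux.Lmat φ e = 1 := Stmt0Aux.unit_left φ e fun x => (he x).1
    obtain ⟨Sq, hmem, hlim⟩ := mem_closure_iff_seq_limit.mp h
    have hth : Filter.Tendsto (fun s => Stmt0Aux.theta e (Sq s)) Filter.atTop (nhds φ) := by
      have hc := (Stmt0Aux.theta_contAt e φ h1 h2).tendsto.comp hlim
      rwa [Stmt0Aux.theta_phi e φ h1 h2] at hc
    refine mem_closure_of_tendsto hth ?_
    have hdetA : Filter.Tendsto (fun s => (Stmt0Aux.Rmat (Sq s) e).det)
        Filter.atTop (nhds 1) := by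
      have hc : Continuous fun S : Fin n → Fin n → Fin n → ℂ => (Stmt0Aux.Rmat S e).det :=
        (Stmt0Aux.cont_Rmat e).matrix_det
      have h3 := (hc.tendsto φ).comp hlim
      rw [Function.comp_def] at h3
      rwa [h1, Matrix.det_one] at h3
    have hdetB : Filter.Tendsto (fun s => (Stmt0Aux.Lmat (Sq s) e).det)
        Filter.atTop (nhds 1) := by
      have hc : Continuous fun S : Fin n → Fin n → Fin n → ℂ => (Stmt0Aux.Lmat S e).det :=
        (Stmt0Aux.cont_Lmat e).matrix_det
      have h3 := (hc.tendsto φ).comp hlim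
      rw [Function.comp_def] at h3
      rwa [h2, Matrix.det_one] at h3
    filter_upwards [hdetA.eventually_ne one_ne_zero, hdetB.eventually_ne one_ne_zero]
      with s hsA hsB
    exact Stmt0Aux.theta_mem μ eA (fun x => (heA x).1) (fun x => (heA x).2) hμ_assoc e (Sq s)
      (hmem s) (isUnit_iff_ne_zero.mpr hsA) (isUnit_iff_ne_zero.mpr hsB)
  · intro h
    refine closure_mono ?_ h
    rintro S ⟨g, rfl⟩
    exact ⟨↑g⁻¹, ↑g⁻¹, ↑g, rfl⟩
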